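/- Let λ be a regular uncountable cardinal, E ⊆ λ a club, β a limit ordinal, e ⊆ β a club in β with e ∩ S = ∅ for a given set S. Then the set c = {α < β : ∃ζ ∈ e, α = sup(ζ ∩ E)} satisfies: every element of c ∩ S is a non-accumulation point of c. -/

import Mathlib

open Ordinal Set Cardinal

/-- Accumulation points of a set of ordinals: `α ≠ 0` with `sup (C ∩ α) = α`. -/
def accS (C : Set Ordinal) : Set Ordinal := {α | α ≠ 0 ∧ sSup (C ∩ Set.Iio α) = α}

/-- Non-accumulation points. -/
def naccS (C : Set Ordinal) : Set Ordinal := C \ accS C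

/-- `C` is a club (closed unbounded set) in the ordinal `lam`. -/
def IsClubIn (C : Set Ordinal) (lam : Ordinal) : Prop :=
  C ⊆ Set.Iio lam ∧
  (∀ α < lam, α ≠ 0 → sSup (C ∩ Set.Iio α) = α → α ∈ C) ∧
  (∀ α < lam, ∃ β ∈ C, α < β)

/-- `S` is stationary in `lam`: it meets every club of `lam`. -/
def IsStatIn (S : Set Ordinal) (lam : Ordinal) : Prop :=
  ∀ C : Set Ordinal, IsClubIn C lam → (S ∩ C).Nonempty
/-- Key use of non-reflection, Lemma 3.1(4): if e ∩ S = ∅ then every point of S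
in the set of E-projections of e is a non-accumulation point of that set. -/
theorem stmt18 (lam : Cardinal) (hreg : lam.IsRegular) (hunc : Cardinal.aleph0 < lam)
    (E : Set Ordinal) (hE : IsClubIn E lam.ord)
    (β : Ordinal) (hβ : β < lam.ord) (hβlim : Order.IsSuccLimit β)
    (e : Set Ordinal) (he : IsClubIn e β)
    (S : Set Ordinal) (heS : e ∩ S = ∅)
    (c : Set Ordinal)
    (hc : c = {α | α < β ∧ ∃ ζ ∈ e, α = sSup (E ∩ Set.Iio ζ)}) :
    ∀ α ∈ c ∩ S, α ∈ naccS c := by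
  have hbdd : ∀ ζ : Ordinal, ∀ T : Set Ordinal, BddAbove (T ∩ Set.Iio ζ) :=
    fun ζ T => ⟨ζ, fun x hx => le_of_lt hx.2⟩
  rintro α ⟨hαc, hαS⟩
  refine ⟨hαc, fun hacc => ?_⟩
  obtain ⟨hα0, hsup⟩ := hacc
  rw [hc] at hαc
  obtain ⟨hαβ, ζα, hζαe, hα⟩ := hαc
  -- Step 1: sSup (E ∩ Iio α) = α
  have hEα : sSup (E ∩ Set.Iio α) = α := by
    set g := sSup (E ∩ Set.Iio α) with hg
    have hgle : g ≤ α := csSup_le' (fun x hx => le_of_lt hx.2)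
    rcases eq_or_lt_of_le hgle with h | h
    · exact h
    · exfalso
      have hle : sSup (c ∩ Set.Iio α) ≤ g := by
        apply csSup_le'
        rintro γ ⟨hγc, hγα⟩
        rw [hc] at hγc
        obtain ⟨hγβ, ζ, hζe, hγ⟩ := hγc
        rw [hγ]
        apply csSup_le'
        rintro ε ⟨hεE, hεζ⟩
        have hεγ : ε ≤ γ := by
          rw [hγ]; exact le_csSup (hbdd ζ E) ⟨hεE, hεζ⟩
        exact le_csSup (hbdd α E) ⟨hεE, lt_of_le_of_lt hεγ hγα⟩
      rw [hsup] at hle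
      exact absurd hle (not_le_of_gt h)
  -- E ∩ Iio α nonempty
  have hEne : (E ∩ Set.Iio α).Nonempty := by
    by_contra hne
    rw [Set.not_nonempty_iff_eq_empty] at hne
    rw [hne, csSup_empty] at hEα
    exact hα0 hEα.symm
  -- Step 2: e is cofinal below α
  have hcof : ∀ δ < α, ∃ ζ ∈ e, δ < ζ ∧ ζ < α := by
    intro δ hδ
    have : ¬ (∀ x ∈ c ∩ Set.Iio α, x ≤ δ) := by
      intro hub
      have := csSup_le' hub
      rw [hsup] at this
      exact absurd this (not_le_of_gt hδ)
    push_neg at this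
    obtain ⟨γ, ⟨hγc, hγα⟩, hδγ⟩ := this
    rw [hc] at hγc
    obtain ⟨hγβ, ζ, hζe, hγ⟩ := hγc
    have hγζ : γ ≤ ζ := by
      rw [hγ]; exact csSup_le' (fun x hx => le_of_lt hx.2)
    refine ⟨ζ, hζe, lt_of_lt_of_le hδγ hγζ, ?_⟩
    by_contra hζα
    push_neg at hζα
    have : α ≤ γ := by
      rw [hγ, ← hEα]
      exact csSup_le_csSup (hbdd ζ E) hEne
        (fun x hx => ⟨hx.1, lt_of_lt_of_le hx.2 hζα⟩)
    exact absurd hγα (not_lt_of_ge this)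
  -- Step 3: sSup (e ∩ Iio α) = α
  have heα : sSup (e ∩ Set.Iio α) = α := by
    apply le_antisymm (csSup_le' (fun x hx => le_of_lt hx.2))
    apply le_of_forall_lt
    intro δ hδ
    obtain ⟨ζ, hζe, hδζ, hζα⟩ := hcof δ hδ
    exact lt_of_lt_of_le hδζ (le_csSup (hbdd α e) ⟨hζe, hζα⟩)
  have : α ∈ e := he.2.1 α hαβ hα0 heα
  have : α ∈ e ∩ S := ⟨this, hαS⟩
  rw [heS] at this
  exact this
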